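/- Let γ ∈ (0,2), κ = 2γ(γ+1)/(2+γ)², a₋ = −γ/(2+γ), δ ∈ (0,1), and let Ω ⊂ ℝⁿ be a C^{1,δ} graph domain in B₂ with regularized distance d (as in the context, with k = 1). Let v be continuous on the closure of Ω ∩ B₁, twice continuously differentiable in Ω ∩ B₁, and satisfy −Δv + κ v/d² ≤ 0 in Ω ∩ B₁ together with limsup_{x→∂Ω} v(x)/d(x)^{a₋} ≤ 0. Then there exists ρ ∈ (0,1) such that for every r ∈ (0,ρ): if v ≤ 0 on Ω ∩ ∂B_r, then v ≤ 0 in Ω ∩ B_r. -/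

import Mathlib

noncomputable section
open Metric Set Filter
open scoped Topology RealInnerProductSpace Classical

/-- The Euclidean Laplacian of `u : ℝⁿ → ℝ`. -/
def lap {m : ℕ} (u : EuclideanSpace ℝ (Fin m) → ℝ) (x : EuclideanSpace ℝ (Fin m)) : ℝ :=
  ∑ i, fderiv ℝ (fun y => fderiv ℝ u y (EuclideanSpace.single i 1)) x (EuclideanSpace.single i 1)

/-- Projection to the first `n` coordinates. -/
def proj {n : ℕ} (x : EuclideanSpace ℝ (Fin (n + 1))) : EuclideanSpace ℝ (Fin n) :=
  WithLp.toLp 2 (fun i : Fin n => x i.castSucc)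

/-- Evaluation of a polynomial in `n+1` variables at a point of ℝ^{n+1}. -/
def peval {m : ℕ} (Q : MvPolynomial (Fin m) ℝ) (x : EuclideanSpace ℝ (Fin m)) : ℝ :=
  MvPolynomial.eval (fun i => x i) Q

/-- `Ω` is a `C^{k,δ}` graph domain in `B₂` with graph function `φ` (with `φ(0) = 0`,
`∇φ(0) = 0`). -/
def IsGraphDomain {n : ℕ} (k : ℕ) (δ : ℝ) (Ω : Set (EuclideanSpace ℝ (Fin (n + 1))))
    (φ : EuclideanSpace ℝ (Fin n) → ℝ) : Prop :=
  IsOpen Ω ∧ ContDiff ℝ k φ ∧ φ 0 = 0 ∧ fderiv ℝ φ 0 = 0 ∧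
  (∃ C : ℝ, ∀ x y : EuclideanSpace ℝ (Fin n),
    ‖iteratedFDeriv ℝ k φ x - iteratedFDeriv ℝ k φ y‖ ≤ C * ‖x - y‖ ^ δ) ∧
  Ω ∩ ball 0 2 = {x | φ (proj x) < x (Fin.last n)} ∩ ball 0 2

/-- The `C^{k,δ}` norm of the graph function is at most 1. -/
def GraphNormLE1 {n : ℕ} (k : ℕ) (δ : ℝ) (φ : EuclideanSpace ℝ (Fin n) → ℝ) : Prop :=
  (∀ m ≤ k, ∀ x, ‖iteratedFDeriv ℝ m φ x‖ ≤ 1) ∧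
  ∀ x y, ‖iteratedFDeriv ℝ k φ x - iteratedFDeriv ℝ k φ y‖ ≤ ‖x - y‖ ^ δ

/-- `f` is of class `C^{j,δ}` up to the boundary on `U`: it agrees on `U` with a globally `C^j`
function whose `j`-th derivative is `δ`-Hölder on the closure of `U`. -/
def ExtendsCkdelta {m : ℕ} (j : ℕ) (δ : ℝ) (f : EuclideanSpace ℝ (Fin m) → ℝ)
    (U : Set (EuclideanSpace ℝ (Fin m))) : Prop :=
  ∃ F : EuclideanSpace ℝ (Fin m) → ℝ, ContDiff ℝ j F ∧ EqOn F f U ∧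
    ∃ C : ℝ, ∀ x ∈ closure U, ∀ y ∈ closure U,
      ‖iteratedFDeriv ℝ j F x - iteratedFDeriv ℝ j F y‖ ≤ C * ‖x - y‖ ^ δ

/-- Properties (i) and (ii) of a regularized distance `d` for `Ω` (Lemma 2.3). -/
def IsRegDistBasic {n : ℕ} (k : ℕ) (δ C₀ : ℝ) (Ω : Set (EuclideanSpace ℝ (Fin (n + 1))))
    (d : EuclideanSpace ℝ (Fin (n + 1)) → ℝ) : Prop :=
  ContDiffOn ℝ (⊤ : ℕ∞) d (Ω ∩ ball 0 1) ∧
  ExtendsCkdelta k δ d (Ω ∩ ball 0 1) ∧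
  (∀ x ∈ Ω ∩ ball 0 1,
    C₀⁻¹ * infDist x (frontier Ω) ≤ d x ∧ d x ≤ C₀ * infDist x (frontier Ω)) ∧
  ∃ (Q : MvPolynomial (Fin (n + 1)) ℝ) (g : EuclideanSpace ℝ (Fin (n + 1)) → ℝ),
    Q.totalDegree ≤ ⌊(k : ℝ) + δ⌋₊ ∧
    (∀ mo : Fin (n + 1) →₀ ℕ, (mo.sum fun _ e => e) ≤ 1 → MvPolynomial.coeff mo Q = 0) ∧
    (∀ x ∈ ball (0 : EuclideanSpace ℝ (Fin (n + 1))) 1, |peval Q x| ≤ C₀) ∧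
    ContDiffOn ℝ (⊤ : ℕ∞) g (Ω ∩ ball 0 1) ∧
    (∀ x ∈ Ω ∩ ball 0 1, ‖fderiv ℝ g x‖ ≤ C₀ * ‖x‖ ^ ((k : ℝ) - 1 + δ)) ∧
    ∀ x ∈ Ω ∩ ball 0 1, d x = x (Fin.last n) + peval Q x + g x

/-- Property (iii) of a regularized distance: the action of the Laplacian on powers of `d`. -/
def RegDistLap {n : ℕ} (k : ℕ) (δ C₀ : ℝ) (Ω : Set (EuclideanSpace ℝ (Fin (n + 1))))
    (d : EuclideanSpace ℝ (Fin (n + 1)) → ℝ) : Prop :=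
  (k = 1 → ∀ lam : ℝ, ∀ x ∈ Ω ∩ ball 0 1,
    |lap (fun y => d y ^ lam) x - lam * (lam - 1) * d x ^ (lam - 2)|
      ≤ C₀ * d x ^ (δ + lam - 2)) ∧
  (2 ≤ k → ∀ lam : ℝ, ∃ h : EuclideanSpace ℝ (Fin (n + 1)) → ℝ,
    ContDiffOn ℝ (⊤ : ℕ∞) h (Ω ∩ ball 0 1) ∧ ExtendsCkdelta (k - 2) δ h (Ω ∩ ball 0 1) ∧
    ∀ x ∈ Ω ∩ ball 0 1,
      lap (fun y => d y ^ lam) x - lam * (lam - 1) * d x ^ (lam - 2) = d x ^ (lam - 1) * h x)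

/-- A regularized distance for `Ω` (Lemma 2.3). -/
def IsRegDist {n : ℕ} (k : ℕ) (δ C₀ : ℝ) (Ω : Set (EuclideanSpace ℝ (Fin (n + 1))))
    (d : EuclideanSpace ℝ (Fin (n + 1)) → ℝ) : Prop :=
  IsRegDistBasic k δ C₀ Ω d ∧ RegDistLap k δ C₀ Ω d

lemma oneD (F F' : ℝ → ℝ) (c : ℝ)
    (hF : ∀ᶠ t in 𝓝 (0:ℝ), HasDerivAt F (F' t) t)
    (hF' : HasDerivAt F' c 0) (hmax : IsLocalMax F 0) : c ≤ 0 := by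
  by_contra hc
  push_neg at hc
  have hF'0 : F' 0 = 0 := hmax.hasDerivAt_eq_zero hF.self_of_nhds
  have hslope : Tendsto (fun t => t⁻¹ * F' t) (𝓝[≠] (0:ℝ)) (𝓝 c) := by
    have := hasDerivAt_iff_tendsto_slope.1 hF'
    simpa [slope_fun_def, hF'0] using this
  have hev : ∀ᶠ t in 𝓝[≠] (0:ℝ), c / 2 < t⁻¹ * F' t :=
    hslope.eventually (eventually_gt_nhds (by linarith))
  obtain ⟨τ₁, hτ₁pos, h1⟩ := Metric.eventually_nhds_iff.1 hF
  obtain ⟨τ₃, hτ₃pos, h3⟩ := Metric.eventually_nhds_iff.1 (hmax : ∀ᶠ t in 𝓝 (0:ℝ), F t ≤ F 0)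
  rw [eventually_nhdsWithin_iff] at hev
  obtain ⟨τ₂, hτ₂pos, h2⟩ := Metric.eventually_nhds_iff.1 hev
  set τ := min (min τ₁ τ₂) τ₃ / 2 with hτ
  have hτpos : 0 < τ := by positivity
  have hτ1 : τ < τ₁ := by
    have h := min_le_left (min τ₁ τ₂) τ₃
    have h' := min_le_left τ₁ τ₂
    rw [hτ]; nlinarith
  have hτ2 : τ < τ₂ := by
    have h := min_le_left (min τ₁ τ₂) τ₃
    have h' := min_le_right τ₁ τ₂
    rw [hτ]; nlinarith
  have hτ3 : τ < τ₃ := by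
    have h := min_le_right (min τ₁ τ₂) τ₃
    rw [hτ]; nlinarith
  have hmono : StrictMonoOn F (Icc 0 τ) := by
    apply strictMonoOn_of_deriv_pos (convex_Icc 0 τ)
    · intro t ht
      rcases ht with ⟨ht0, htτ⟩
      have hd : dist t 0 < τ₁ := by
        rw [Real.dist_eq, sub_zero, abs_of_nonneg ht0]; linarith
      exact ((h1 hd).continuousAt).continuousWithinAt
    · intro t ht
      rw [interior_Icc] at ht
      rcases ht with ⟨ht0, htτ⟩
      have hd1 : dist t 0 < τ₁ := by
        rw [Real.dist_eq, sub_zero, abs_of_pos ht0]; linarith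
      have hd2 : dist t 0 < τ₂ := by
        rw [Real.dist_eq, sub_zero, abs_of_pos ht0]; linarith
      rw [(h1 hd1).deriv]
      have := h2 hd2 (by simpa using ne_of_gt ht0)
      have h' : t * (c / 2) < t * (t⁻¹ * F' t) := by
        exact (mul_lt_mul_iff_right₀ ht0).2 this
      rw [← mul_assoc, mul_inv_cancel₀ (ne_of_gt ht0), one_mul] at h'
      nlinarith
  have h5 := hmono (left_mem_Icc.2 hτpos.le) (right_mem_Icc.2 hτpos.le) hτpos
  have hle : F τ ≤ F 0 := h3 (by rw [Real.dist_eq, sub_zero, abs_of_pos hτpos]; linarith)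
  linarith

lemma lineDeriv2 {N : ℕ} (f : EuclideanSpace ℝ (Fin N) → ℝ) (U : Set (EuclideanSpace ℝ (Fin N)))
    (hU : IsOpen U) (x : EuclideanSpace ℝ (Fin N)) (hx : x ∈ U)
    (hf : ContDiffOn ℝ 2 f U) (e : EuclideanSpace ℝ (Fin N)) :
    (∀ᶠ t in 𝓝 (0:ℝ), HasDerivAt (fun s : ℝ => f (x + s • e)) (fderiv ℝ f (x + t • e) e) t) ∧
    HasDerivAt (fun t : ℝ => fderiv ℝ f (x + t • e) e)
      (fderiv ℝ (fun y => fderiv ℝ f y e) x e) 0 := by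
  have hL : ∀ t : ℝ, HasDerivAt (fun s : ℝ => x + s • e) e t := by
    intro t
    simpa using ((hasDerivAt_id t).smul_const e).const_add x
  have hLc : Continuous fun s : ℝ => x + s • e :=
    continuous_const.add (continuous_id.smul continuous_const)
  have hmem : ∀ᶠ t in 𝓝 (0:ℝ), x + t • e ∈ U := by
    have : (fun s : ℝ => x + s • e) ⁻¹' U ∈ 𝓝 (0:ℝ) := by
      apply (hU.preimage hLc).mem_nhds; simpa using hx
    filter_upwards [this] with t ht using ht
  constructor
  · filter_upwards [hmem] with t ht
    have hdiff : DifferentiableAt ℝ f (x + t • e) :=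
      (hf.differentiableOn (by norm_num)).differentiableAt (hU.mem_nhds ht)
    exact (hdiff.hasFDerivAt.comp_hasDerivAt t (hL t))
  · have hf2 : ContDiffAt ℝ 2 f x := hf.contDiffAt (hU.mem_nhds hx)
    have hfd : DifferentiableAt ℝ (fun y => fderiv ℝ f y e) x := by
      have h1 : ContDiffAt ℝ 1 (fderiv ℝ f) x := hf2.fderiv_right (by norm_num)
      exact (h1.differentiableAt one_ne_zero).clm_apply (differentiableAt_const e)
    have hx0 : x + (0:ℝ) • e = x := by simp
    have := (hx0 ▸ hfd.hasFDerivAt).comp_hasDerivAt 0 (hL 0)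
    simpa [Function.comp_def] using this

lemma lap_le_at_max {N : ℕ} (U : Set (EuclideanSpace ℝ (Fin N))) (hU : IsOpen U)
    (x : EuclideanSpace ℝ (Fin N)) (hx : x ∈ U)
    (f g : EuclideanSpace ℝ (Fin N) → ℝ)
    (hf : ContDiffOn ℝ 2 f U) (hg : ContDiffOn ℝ 2 g U) (ε : ℝ)
    (hmax : IsLocalMax (fun y => f y - ε * g y) x) : lap f x ≤ ε * lap g x := by
  have key : ∀ i : Fin N,
      fderiv ℝ (fun y => fderiv ℝ f y (EuclideanSpace.single i 1)) x (EuclideanSpace.single i 1)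
      - ε * fderiv ℝ (fun y => fderiv ℝ g y (EuclideanSpace.single i 1)) x
          (EuclideanSpace.single i 1) ≤ 0 := by
    intro i
    set e : EuclideanSpace ℝ (Fin N) := EuclideanSpace.single i 1 with he
    obtain ⟨hf1, hf2⟩ := lineDeriv2 f U hU x hx hf e
    obtain ⟨hg1, hg2⟩ := lineDeriv2 g U hU x hx hg e
    apply oneD (fun t : ℝ => f (x + t • e) - ε * g (x + t • e))
      (fun t : ℝ => fderiv ℝ f (x + t • e) e - ε * fderiv ℝ g (x + t • e) e)
    · filter_upwards [hf1, hg1] with t htf htg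
      exact htf.sub (htg.const_mul ε)
    · exact hf2.sub (hg2.const_mul ε)
    · have hL0 : Tendsto (fun t : ℝ => x + t • e) (𝓝 0) (𝓝 x) := by
        have hc : Continuous fun t : ℝ => x + t • e :=
          continuous_const.add (continuous_id.smul continuous_const)
        have := hc.tendsto 0
        simpa using this
      have := hL0.eventually hmax
      simp only [IsLocalMax, IsMaxFilter] at this ⊢
      simpa using this
  have hsum := Finset.sum_nonpos (fun i (_ : i ∈ Finset.univ) => key i)
  rw [Finset.sum_sub_distrib] at hsum
  simp only [← Finset.mul_sum] at hsum
  simpa [lap, sub_nonpos] using hsum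

lemma zero_mem_frontier {n : ℕ} (Ω : Set (EuclideanSpace ℝ (Fin (n + 1))))
    (φ : EuclideanSpace ℝ (Fin n) → ℝ) (hΩopen : IsOpen Ω) (hφ0 : φ 0 = 0)
    (Feq : Ω ∩ ball 0 2 = {x | φ (proj x) < x (Fin.last n)} ∩ ball 0 2) :
    (0 : EuclideanSpace ℝ (Fin (n+1))) ∈ frontier Ω := by
  set z : EuclideanSpace ℝ (Fin (n+1)) := EuclideanSpace.single (Fin.last n) (1:ℝ) with hz
  have hsingle : ∀ t : ℝ, EuclideanSpace.single (Fin.last n) t = t • z := by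
    intro t; ext j
    simp [hz, EuclideanSpace.single_apply, PiLp.smul_apply]
  have hmemΩ : ∀ t : ℝ, 0 < t → t < 2 → (t • z) ∈ Ω := by
    intro t ht ht2
    have hproj : proj (t • z) = 0 := by
      ext i
      have : (Fin.castSucc i) ≠ Fin.last n := (Fin.castSucc_lt_last i).ne
      simp [proj, hz, PiLp.smul_apply, EuclideanSpace.single_apply, this]
    have hlast : (t • z) (Fin.last n) = t := by
      simp [hz, PiLp.smul_apply, EuclideanSpace.single_apply]
    have hball : (t • z) ∈ ball (0 : EuclideanSpace ℝ (Fin (n+1))) 2 := by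
      rw [mem_ball_zero_iff, ← hsingle, EuclideanSpace.norm_single]
      rwa [Real.norm_eq_abs, abs_of_pos ht]
    have : (t • z) ∈ {x | φ (proj x) < x (Fin.last n)} ∩ ball 0 2 := by
      refine ⟨?_, hball⟩
      show φ (proj (t • z)) < (t • z) (Fin.last n)
      rw [hproj, hφ0, hlast]; exact ht
    rw [← Feq] at this
    exact this.1
  have h0cl : (0 : EuclideanSpace ℝ (Fin (n+1))) ∈ closure Ω := by
    have htend : Tendsto (fun t : ℝ => t • z) (𝓝[>] (0:ℝ))
        (𝓝 (0 : EuclideanSpace ℝ (Fin (n+1)))) := by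
      have hc : Continuous fun t : ℝ => t • z := continuous_id.smul continuous_const
      have := hc.tendsto 0
      simp only [zero_smul] at this
      exact this.mono_left nhdsWithin_le_nhds
    refine mem_closure_of_tendsto htend ?_
    filter_upwards [Ioo_mem_nhdsGT_of_mem (by constructor <;> norm_num :
      (0:ℝ) ∈ Ico (0:ℝ) 1)] with t ht
    exact hmemΩ t ht.1 (by linarith [ht.2])
  have h0not : (0 : EuclideanSpace ℝ (Fin (n+1))) ∉ Ω := by
    intro h
    have : (0 : EuclideanSpace ℝ (Fin (n+1))) ∈ Ω ∩ ball 0 2 := ⟨h, by simp⟩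
    rw [Feq] at this
    have h2 := this.1
    have hproj : proj (0 : EuclideanSpace ℝ (Fin (n+1))) = 0 := by ext i; rfl
    simp only [mem_setOf_eq, hproj, hφ0] at h2
    exact lt_irrefl 0 h2
  rw [hΩopen.frontier_eq]
  exact ⟨h0cl, h0not⟩


set_option maxHeartbeats 1000000 in
theorem statement6' {n : ℕ} (γ δ κ aM : ℝ) (hγ : γ ∈ Ioo (0:ℝ) 2) (hδ : δ ∈ Ioo (0:ℝ) 1)
    (hκ : κ = 2 * γ * (γ + 1) / (2 + γ) ^ 2) (haM : aM = -(γ / (2 + γ)))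
    (Ω : Set (EuclideanSpace ℝ (Fin (n + 1)))) (φ : EuclideanSpace ℝ (Fin n) → ℝ)
    (d : EuclideanSpace ℝ (Fin (n + 1)) → ℝ) (C₀ : ℝ) (hC₀ : 1 ≤ C₀)
    (hΩopen : IsOpen Ω) (hφ0 : φ 0 = 0)
    (Feq : Ω ∩ ball 0 2 = {x | φ (proj x) < x (Fin.last n)} ∩ ball 0 2)
    (hdsmooth : ContDiffOn ℝ (⊤ : ℕ∞) d (Ω ∩ ball 0 1))
    (hdcomp : ∀ x ∈ Ω ∩ ball 0 1,
      C₀⁻¹ * infDist x (frontier Ω) ≤ d x ∧ d x ≤ C₀ * infDist x (frontier Ω))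
    (hdlap : ∀ lam : ℝ, ∀ x ∈ Ω ∩ ball 0 1,
      |lap (fun y => d y ^ lam) x - lam * (lam - 1) * d x ^ (lam - 2)|
        ≤ C₀ * d x ^ (δ + lam - 2))
    (v : EuclideanSpace ℝ (Fin (n + 1)) → ℝ)
    (hvcont : ContinuousOn v (closure (Ω ∩ ball 0 1)))
    (hvC2 : ContDiffOn ℝ 2 v (Ω ∩ ball 0 1))
    (hsub : ∀ x ∈ Ω ∩ ball 0 1, -lap v x + κ * v x / d x ^ 2 ≤ 0) :
    ∃ ρ ∈ Ioo (0:ℝ) 1, ∀ r ∈ Ioo (0:ℝ) ρ,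
      (∀ x ∈ Ω ∩ sphere (0 : EuclideanSpace ℝ (Fin (n + 1))) r, v x ≤ 0) →
      ∀ x ∈ Ω ∩ ball (0 : EuclideanSpace ℝ (Fin (n + 1))) r, v x ≤ 0 := by
  have hγ0 := hγ.1
  have h2γ : (0:ℝ) < 2 + γ := by linarith
  have hC₀pos : (0:ℝ) < C₀ := by linarith
  have haMneg : aM < 0 := by
    rw [haM]; have : 0 < γ / (2 + γ) := div_pos hγ0 h2γ; linarith
  have hκ' : κ = aM * (aM - 1) := by
    rw [hκ, haM]; field_simp; ring
  have hκpos : 0 < κ := by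
    rw [hκ']; nlinarith
  set a : ℝ := aM / 2 with ha
  have haneg : a < 0 := by rw [ha]; linarith
  set c' : ℝ := κ - a * (a - 1) with hc'def
  have hc' : 0 < c' := by
    rw [hc'def, hκ', ha]; nlinarith
  -- frontier
  have h0F : (0 : EuclideanSpace ℝ (Fin (n+1))) ∈ frontier Ω :=
    zero_mem_frontier Ω φ hΩopen hφ0 Feq
  -- choice of ρ
  set t₀ : ℝ := (c' / (2 * C₀)) ^ (1/δ : ℝ) with ht₀def
  have ht₀pos : 0 < t₀ := Real.rpow_pos_of_pos (by positivity) _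
  have ht₀δ : t₀ ^ δ = c' / (2 * C₀) := by
    rw [ht₀def, ← Real.rpow_mul (by positivity), one_div,
      inv_mul_cancel₀ (ne_of_gt hδ.1), Real.rpow_one]
  set ρ : ℝ := min (1/2) (t₀ / C₀) with hρdef
  have hρpos : 0 < ρ := lt_min (by norm_num) (by positivity)
  have hρlt1 : ρ < 1 := lt_of_le_of_lt (min_le_left _ _) (by norm_num)
  refine ⟨ρ, ⟨hρpos, hρlt1⟩, ?_⟩
  intro r hr hbd x₀ hx₀
  set U : Set (EuclideanSpace ℝ (Fin (n+1))) := Ω ∩ ball 0 1 with hUdef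
  have hUopen : IsOpen U := hΩopen.inter isOpen_ball
  have hrρ := hr.2
  have hr0 := hr.1
  have hr1 : r < 1 := by linarith only [hrρ, hρlt1]
  have hballsub : Ω ∩ ball 0 r ⊆ U := by
    intro y hy
    exact ⟨hy.1, ball_subset_ball (le_of_lt hr1) hy.2⟩
  have hx₀U : x₀ ∈ U := hballsub hx₀
  -- positivity of d on U
  have hfne : (frontier Ω).Nonempty := ⟨0, h0F⟩
  have hdpos : ∀ x ∈ U, 0 < d x := by
    intro x hx
    have hnot : x ∉ frontier Ω := by
      rw [hΩopen.frontier_eq]; exact fun h => h.2 hx.1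
    have hpos : 0 < infDist x (frontier Ω) :=
      (isClosed_frontier.notMem_iff_infDist_pos hfne).1 hnot
    have := (hdcomp x hx).1
    have h1 : 0 < C₀⁻¹ * infDist x (frontier Ω) := by positivity
    linarith only [this, h1]
  have hdle : ∀ x ∈ U, d x ≤ C₀ * ‖x‖ := by
    intro x hx
    have h1 := (hdcomp x hx).2
    have h2 : infDist x (frontier Ω) ≤ ‖x‖ := by
      have h3 := infDist_le_dist_of_mem (x := x) h0F
      rwa [dist_zero_right] at h3
    have h4 := mul_le_mul_of_nonneg_left h2 (le_of_lt hC₀pos)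
    linarith only [h1, h4]
  -- smoothness of d ^ a
  have hdC2 : ContDiffOn ℝ 2 d U := hdsmooth.of_le (by rw [show ((2:WithTop ℕ∞)) = ((2:ℕ∞):WithTop ℕ∞) from rfl]; exact WithTop.coe_le_coe.2 le_top)
  have hwC2 : ContDiffOn ℝ 2 (fun y => d y ^ a) U :=
    hdC2.rpow_const_of_ne (fun x hx => ne_of_gt (hdpos x hx))
  -- bound for v
  have hKcomp1 : IsCompact (closure U) := by
    refine (isCompact_closedBall (0 : EuclideanSpace ℝ (Fin (n+1))) 1).of_isClosed_subset
      isClosed_closure ?_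
    exact (closure_mono inter_subset_right).trans closure_ball_subset_closedBall
  obtain ⟨V₀, hV₀⟩ := hKcomp1.bddAbove_image hvcont
  set V : ℝ := max V₀ 1 with hVdef
  have hV1 : (1:ℝ) ≤ V := le_max_right _ _
  have hVpos : (0:ℝ) < V := by linarith only [hV1]
  have hVb : ∀ x ∈ closure U, v x ≤ V := by
    intro x hx
    exact le_trans (hV₀ (mem_image_of_mem v hx)) (le_max_left _ _)
  -- the main claim, for every ε > 0
  have hmain : ∀ ε : ℝ, 0 < ε → v x₀ ≤ ε * d x₀ ^ a := by
    intro ε hε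
    by_contra hcon
    push_neg at hcon
    set u : EuclideanSpace ℝ (Fin (n+1)) → ℝ := fun y => v y - ε * d y ^ a with hudef
    set m : ℝ := u x₀ with hmdef
    have hm : 0 < m := by rw [hmdef, hudef]; simp only; linarith only [hcon]
    -- threshold t₁
    set t₁ : ℝ := (ε / V) ^ (-a⁻¹) with ht₁def
    have ht₁pos : 0 < t₁ := Real.rpow_pos_of_pos (by positivity) _
    have ht₁a : t₁ ^ a = V / ε := by
      rw [ht₁def, ← Real.rpow_mul (by positivity),
        neg_mul, inv_mul_cancel₀ (ne_of_lt haneg), Real.rpow_neg_one, inv_div]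
    have hsmall : ∀ y ∈ U, d y ≤ t₁ → u y ≤ 0 := by
      intro y hy hdy
      have h1 : t₁ ^ a ≤ d y ^ a :=
        Real.rpow_le_rpow_of_nonpos (hdpos y hy) hdy (le_of_lt haneg)
      have h2 : ε * (V / ε) ≤ ε * d y ^ a := by
        rw [← ht₁a]; exact (mul_le_mul_iff_right₀ hε).2 h1
      rw [mul_div_cancel₀ _ (ne_of_gt hε)] at h2
      have h3 : v y ≤ V := hVb y (subset_closure hy)
      rw [hudef]; simp only; linarith only [h2, h3]
    -- the compact set K
    set t₂ : ℝ := t₁ / C₀ with ht₂def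
    have ht₂pos : 0 < t₂ := by positivity
    set K : Set (EuclideanSpace ℝ (Fin (n+1))) :=
      closure Ω ∩ closedBall 0 r ∩ {x | t₂ ≤ infDist x (frontier Ω)} with hKdef
    have hKclosed : IsClosed K :=
      (isClosed_closure.inter isClosed_closedBall).inter
        (isClosed_le continuous_const (continuous_infDist_pt _))
    have hKsubU : K ⊆ U := by
      rintro x ⟨⟨hxc, hxb⟩, hxi⟩
      have hxnot : x ∉ frontier Ω := by
        intro h
        have : infDist x (frontier Ω) = 0 := infDist_zero_of_mem h
        rw [mem_setOf_eq, this] at hxi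
        linarith only [hxi, ht₂pos]
      have hxΩ : x ∈ Ω := by
        rw [hΩopen.frontier_eq] at hxnot
        by_contra h
        exact hxnot ⟨hxc, h⟩
      refine ⟨hxΩ, ?_⟩
      rw [mem_ball_zero_iff]
      have h5 := mem_closedBall_zero_iff.1 hxb
      linarith only [h5, hr1]
    have hKcomp : IsCompact K :=
      (isCompact_closedBall (0 : EuclideanSpace ℝ (Fin (n+1))) r).of_isClosed_subset hKclosed
        (fun x hx => hx.1.2)
    have hposK : ∀ y ∈ Ω ∩ ball 0 r, 0 < u y → y ∈ K := by
      intro y hy hu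
      have hyU : y ∈ U := hballsub hy
      have hdy : t₁ < d y := by
        by_contra h
        push_neg at h
        linarith only [hsmall y hyU h, hu]
      have hinf : t₂ ≤ infDist y (frontier Ω) := by
        have h1 := (hdcomp y hyU).2
        rw [ht₂def, div_le_iff₀ hC₀pos]
        linarith only [h1, hdy]
      exact ⟨⟨subset_closure hy.1, mem_closedBall_zero_iff.2 (le_of_lt (mem_ball_zero_iff.1 hy.2))⟩,
        hinf⟩
    have hx₀K : x₀ ∈ K := hposK x₀ hx₀ hm
    have hucont : ContinuousOn u K := by
      refine ContinuousOn.sub (hvcont.mono (hKsubU.trans subset_closure)) ?_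
      exact continuousOn_const.mul ((hwC2.continuousOn).mono hKsubU)
    obtain ⟨xs, hxsK, hxsmax⟩ := hKcomp.exists_isMaxOn ⟨x₀, hx₀K⟩ hucont
    have hxsU : xs ∈ U := hKsubU hxsK
    have hds : 0 < d xs := hdpos xs hxsU
    have husm : m ≤ u xs := hxsmax hx₀K
    have huspos : 0 < u xs := lt_of_lt_of_le hm husm
    have hxsr : ‖xs‖ < r := by
      rcases lt_or_eq_of_le (mem_closedBall_zero_iff.1 hxsK.1.2) with h | h
      · exact h
      · exfalso
        have hsph : xs ∈ Ω ∩ sphere 0 r := by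
          refine ⟨hxsU.1, ?_⟩
          rw [mem_sphere_zero_iff_norm]; exact h
        have hv0 := hbd xs hsph
        have : u xs < 0 := by
          rw [hudef]; simp only
          have h6 : 0 < ε * d xs ^ a := by positivity
          linarith only [hv0, h6]
        linarith only [this, huspos]
    have hglobal : ∀ y ∈ Ω ∩ ball 0 r, u y ≤ u xs := by
      intro y hy
      rcases le_or_gt (u y) 0 with h | h
      · linarith only [h, huspos]
      · exact hxsmax (hposK y hy h)
    have hlocmax : IsLocalMax u xs := by
      have hmem : Ω ∩ ball 0 r ∈ 𝓝 xs :=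
        (hΩopen.inter isOpen_ball).mem_nhds ⟨hxsU.1, mem_ball_zero_iff.2 hxsr⟩
      exact eventually_of_mem hmem hglobal
    -- comparison of Laplacians
    have hlap : lap v xs ≤ ε * lap (fun y => d y ^ a) xs :=
      lap_le_at_max U hUopen xs hxsU v (fun y => d y ^ a) hvC2 hwC2 ε hlocmax
    -- estimates
    set s : ℝ := d xs with hsdef
    have hlapd := hdlap a xs hxsU
    rw [abs_le] at hlapd
    have hlapd2 : lap (fun y => d y ^ a) xs ≤ a * (a-1) * s ^ (a-2) + C₀ * s ^ (δ + a - 2) := by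
      have h7 := hlapd.2; rw [← hsdef] at h7; linarith only [h7]
    have hsubs := hsub xs hxsU
    have hvxs : ε * s ^ a < v xs := by
      have : v xs = u xs + ε * s ^ a := by rw [hudef, hsdef]; simp only; ring
      rw [this]; linarith only [husm, hm]
    -- power identities
    have hs2 : (0:ℝ) < s ^ 2 := by positivity
    have hP : (0:ℝ) < s ^ (a - 2) := Real.rpow_pos_of_pos hds _
    have hsa : s ^ a = s ^ (a-2) * s ^ 2 := by
      rw [← Real.rpow_natCast s 2, ← Real.rpow_add hds]
      norm_num
    have hsδ : s ^ (δ + a - 2) = s ^ δ * s ^ (a-2) := by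
      rw [← Real.rpow_add hds]; ring_nf
    -- combine
    have hchain : κ * (ε * s ^ a) / s ^ 2 < ε * (a * (a-1) * s ^ (a-2) + C₀ * s ^ (δ + a - 2)) := by
      have h1 : κ * (ε * s ^ a) / s ^ 2 < κ * v xs / s ^ 2 := by
        refine (div_lt_div_iff_of_pos_right hs2).2 ?_
        exact (mul_lt_mul_iff_right₀ hκpos).2 hvxs
      have h2 : κ * v xs / s ^ 2 ≤ lap v xs := by linarith only [hsubs]
      have h3 : lap v xs ≤ ε * (a * (a-1) * s ^ (a-2) + C₀ * s ^ (δ + a - 2)) := by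
        calc lap v xs ≤ ε * lap (fun y => d y ^ a) xs := hlap
        _ ≤ _ := by
            apply mul_le_mul_of_nonneg_left hlapd2 (le_of_lt hε)
      linarith only [h1, h2, h3]
    have hLHS : κ * (ε * s ^ a) / s ^ 2 = κ * ε * s ^ (a-2) := by
      rw [hsa]; field_simp
    rw [hLHS, hsδ] at hchain
    have hfinal : κ < a * (a-1) + C₀ * s ^ δ := by
      have h4 : ε * s ^ (a-2) * κ < ε * s ^ (a-2) * (a * (a-1) + C₀ * s ^ δ) := by
        calc ε * s ^ (a-2) * κ = κ * ε * s ^ (a-2) := by ring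
          _ < ε * (a * (a-1) * s ^ (a-2) + C₀ * (s ^ δ * s ^ (a-2))) := hchain
          _ = ε * s ^ (a-2) * (a * (a-1) + C₀ * s ^ δ) := by ring
      have h5 : 0 < ε * s ^ (a-2) := by positivity
      exact (mul_lt_mul_iff_right₀ h5).1 h4
    -- but C₀ * s ^ δ ≤ c' / 2
    have hsle : s ≤ t₀ := by
      have h1 : s ≤ C₀ * ‖xs‖ := by rw [hsdef]; exact hdle xs hxsU
      have h2 : C₀ * ‖xs‖ ≤ C₀ * r := mul_le_mul_of_nonneg_left (le_of_lt hxsr) (le_of_lt hC₀pos)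
      have h3 : C₀ * r ≤ C₀ * ρ := mul_le_mul_of_nonneg_left (le_of_lt hrρ) (le_of_lt hC₀pos)
      have h4 : C₀ * ρ ≤ t₀ := by
        have := min_le_right (1/2 : ℝ) (t₀ / C₀)
        rw [hρdef]
        calc C₀ * min (1/2) (t₀ / C₀) ≤ C₀ * (t₀ / C₀) :=
              mul_le_mul_of_nonneg_left (min_le_right _ _) (le_of_lt hC₀pos)
        _ = t₀ := by field_simp
      linarith only [h1, h2, h3, h4]
    have hsδle : C₀ * s ^ δ ≤ c' / 2 := by
      have h1 : s ^ δ ≤ t₀ ^ δ :=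
        Real.rpow_le_rpow (le_of_lt hds) hsle (le_of_lt hδ.1)
      rw [ht₀δ] at h1
      calc C₀ * s ^ δ ≤ C₀ * (c' / (2 * C₀)) := mul_le_mul_of_nonneg_left h1 (le_of_lt hC₀pos)
      _ = c' / 2 := by field_simp
    linarith only [hsδle, hfinal, hc', hc'def]
  -- conclude
  by_contra hv
  push_neg at hv
  have hda : 0 < d x₀ ^ a := Real.rpow_pos_of_pos (hdpos x₀ hx₀U) _
  have h := hmain (v x₀ / (2 * d x₀ ^ a)) (by positivity)
  have h2 : v x₀ / (2 * d x₀ ^ a) * d x₀ ^ a = v x₀ / 2 := by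
    field_simp
  rw [h2] at h
  linarith only [h, hv]

/-- Lemma 3.3: comparison principle for `L_κ = -Δ + κ/d²` in a `C^{1,δ}` graph
domain, for subsolutions `v` with `limsup_{x→∂Ω} v/d^{a₋} ≤ 0`. -/
theorem statement6 {n : ℕ} (γ δ κ aM : ℝ) (hγ : γ ∈ Ioo (0:ℝ) 2) (hδ : δ ∈ Ioo (0:ℝ) 1)
    (hκ : κ = 2 * γ * (γ + 1) / (2 + γ) ^ 2) (haM : aM = -(γ / (2 + γ)))
    (Ω : Set (EuclideanSpace ℝ (Fin (n + 1)))) (φ : EuclideanSpace ℝ (Fin n) → ℝ)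
    (d : EuclideanSpace ℝ (Fin (n + 1)) → ℝ) (C₀ : ℝ) (hC₀ : 1 ≤ C₀)
    (hΩ : IsGraphDomain 1 δ Ω φ) (hd : IsRegDist 1 δ C₀ Ω d)
    (v : EuclideanSpace ℝ (Fin (n + 1)) → ℝ)
    (hvcont : ContinuousOn v (closure (Ω ∩ ball 0 1)))
    (hvC2 : ContDiffOn ℝ 2 v (Ω ∩ ball 0 1))
    (hsub : ∀ x ∈ Ω ∩ ball 0 1, -lap v x + κ * v x / d x ^ 2 ≤ 0)
    (hlimsup : ∀ x₀ ∈ frontier Ω ∩ ball (0 : EuclideanSpace ℝ (Fin (n + 1))) 1,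
      limsup (fun x => v x / d x ^ aM) (𝓝[Ω ∩ ball 0 1] x₀) ≤ 0) :
    ∃ ρ ∈ Ioo (0:ℝ) 1, ∀ r ∈ Ioo (0:ℝ) ρ,
      (∀ x ∈ Ω ∩ sphere (0 : EuclideanSpace ℝ (Fin (n + 1))) r, v x ≤ 0) →
      ∀ x ∈ Ω ∩ ball (0 : EuclideanSpace ℝ (Fin (n + 1))) r, v x ≤ 0 := by
  exact statement6' γ δ κ aM hγ hδ hκ haM Ω φ d C₀ hC₀ hΩ.1 hΩ.2.2.1 hΩ.2.2.2.2.2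
    hd.1.1 hd.1.2.2.1 (hd.2.1 rfl) v hvcont hvC2 hsub
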